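/- For all square-free monomials f, g in m variables: f ⪯ g if and only if the multiplicative complement of g is ⪯ the multiplicative complement of f (i.e., ǧ ⪯ f̌). -/

import Mathlib

open scoped List


/-- The partial order `⪯` on square-free monomials (identified with their sets of
variable indices). -/
def preceq {m : ℕ} (S T : Finset (Fin m)) : Prop :=
  ∃ T' ⊆ T, T'.card = S.card ∧
    List.Forall₂ (· ≤ ·) (S.sort (· ≤ ·)) (T'.sort (· ≤ ·))

/-- Count of elements of `S` that are `≥ x`. -/
def cnt {m : ℕ} (S : Finset (Fin m)) (x : Fin m) : ℕ :=
  (S.filter (fun y => x ≤ y)).card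

lemma countP_sort {m : ℕ} (S : Finset (Fin m)) (x : Fin m) :
    (S.sort (· ≤ ·)).countP (fun y => decide (x ≤ y)) = cnt S x := by
  have h1 : Multiset.countP (fun y => x ≤ y) (↑(S.sort (· ≤ ·)) : Multiset (Fin m))
      = (S.sort (· ≤ ·)).countP (fun y => decide (x ≤ y)) := Multiset.coe_countP _ _
  rw [← h1, Finset.sort_eq]
  unfold cnt
  rw [Multiset.countP_eq_card_filter]
  rfl

lemma forall2_countP_le {m : ℕ} {l1 l2 : List (Fin m)}
    (h : List.Forall₂ (· ≤ ·) l1 l2) (x : Fin m) :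
    l1.countP (fun y => decide (x ≤ y)) ≤ l2.countP (fun y => decide (x ≤ y)) := by
  induction h with
  | nil => simp
  | @cons a b l₁ l₂ hab htl ih =>
    simp only [List.countP_cons]
    by_cases hx : x ≤ a
    · have hx2 : x ≤ b := le_trans hx hab
      simp only [hx, hx2]
      simpa using ih
    · by_cases hx2 : x ≤ b <;> simp [hx, hx2] <;> omega

lemma cnt_le_of_preceq {m : ℕ} {S T : Finset (Fin m)} (h : preceq S T) (x : Fin m) :
    cnt S x ≤ cnt T x := by
  obtain ⟨T', hsub, hcard, hf⟩ := h
  have h1 : cnt S x ≤ cnt T' x := by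
    rw [← countP_sort, ← countP_sort]
    exact forall2_countP_le hf x
  have h2 : cnt T' x ≤ cnt T x :=
    Finset.card_le_card (Finset.filter_subset_filter _ hsub)
  omega

lemma sort_insert_max {m : ℕ} {a : Fin m} {s : Finset (Fin m)} (h1 : ∀ b ∈ s, b ≤ a)
    (h2 : a ∉ s) : (insert a s).sort (· ≤ ·) = s.sort (· ≤ ·) ++ [a] := by
  have hperm : (insert a s).sort (· ≤ ·) ~ s.sort (· ≤ ·) ++ [a] :=
    calc (insert a s).sort (· ≤ ·) ~ (insert a s).toList := Finset.sort_perm_toList _ _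
    _ ~ a :: s.toList := Finset.toList_insert h2
    _ ~ a :: s.sort (· ≤ ·) := List.Perm.cons a (Finset.sort_perm_toList _ _).symm
    _ ~ s.sort (· ≤ ·) ++ [a] := (List.perm_append_singleton _ _).symm
  have hsorted : List.Pairwise (· ≤ ·) (s.sort (· ≤ ·) ++ [a]) := by
    rw [List.pairwise_append]
    refine ⟨Finset.pairwise_sort _ _, List.pairwise_singleton _ a, ?_⟩
    intro b hb c hc
    rw [List.mem_singleton] at hc
    subst hc
    exact h1 b (Finset.mem_sort (· ≤ ·) |>.mp hb)
  exact List.Perm.eq_of_pairwise' (Finset.pairwise_sort _ _) hsorted hperm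

lemma cnt_erase {m : ℕ} {S : Finset (Fin m)} {s : Fin m} (hs : s ∈ S) (x : Fin m) :
    cnt (S.erase s) x = cnt S x - (if x ≤ s then 1 else 0) := by
  unfold cnt
  rw [Finset.filter_erase]
  by_cases h : x ≤ s
  · rw [Finset.card_erase_of_mem (Finset.mem_filter.mpr ⟨hs, h⟩)]
    simp [h]
  · rw [Finset.erase_eq_of_notMem]
    · simp [h]
    · simp [Finset.mem_filter, h]

lemma preceq_of_cnt {m : ℕ} (S : Finset (Fin m)) : ∀ T : Finset (Fin m),
    (∀ x, cnt S x ≤ cnt T x) → preceq S T := by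
  induction S using Finset.strongInduction with
  | _ S ih =>
    intro T h
    rcases S.eq_empty_or_nonempty with rfl | hS
    · exact ⟨∅, Finset.empty_subset T, by simp, by simp⟩
    · set s := S.max' hS with hs_def
      have hsS : s ∈ S := S.max'_mem hS
      have hcnt : 1 ≤ cnt S s := by
        unfold cnt
        exact Finset.card_pos.mpr ⟨s, Finset.mem_filter.mpr ⟨hsS, le_refl s⟩⟩
      have hTs : 1 ≤ cnt T s := le_trans hcnt (h s)
      have hTne : (T.filter (fun y => s ≤ y)).Nonempty := Finset.card_pos.mp hTs
      have hTne' : T.Nonempty := hTne.mono (Finset.filter_subset _ _)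
      set t := T.max' hTne' with ht_def
      have htT : t ∈ T := T.max'_mem hTne'
      have hst : s ≤ t := by
        obtain ⟨y, hy⟩ := hTne
        rw [Finset.mem_filter] at hy
        exact le_trans hy.2 (T.le_max' y hy.1)
      -- counts for erased sets
      have hsub : ∀ x, cnt (S.erase s) x ≤ cnt (T.erase t) x := by
        intro x
        rw [cnt_erase hsS, cnt_erase htT]
        by_cases hx : x ≤ s
        · have hx2 : x ≤ t := le_trans hx hst
          have := h x
          simp [hx, hx2]; omega
        · have : cnt S x = 0 := by
            unfold cnt
            rw [Finset.card_eq_zero, Finset.filter_eq_empty_iff]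
            intro y hy hxy
            exact hx (le_trans hxy (S.le_max' y hy))
          simp [this]
      obtain ⟨T', hT'sub, hT'card, hT'f⟩ :=
        ih (S.erase s) (Finset.erase_ssubset hsS) (T.erase t) hsub
      refine ⟨insert t T', ?_, ?_, ?_⟩
      · intro y hy
        rcases Finset.mem_insert.mp hy with rfl | hy
        · exact htT
        · exact Finset.mem_of_mem_erase (hT'sub hy)
      · have htT' : t ∉ T' := fun hc => (Finset.notMem_erase t T) (hT'sub hc)
        rw [Finset.card_insert_of_notMem htT', hT'card,
          Finset.card_erase_of_mem hsS]
        have : 1 ≤ S.card := Finset.card_pos.mpr hS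
        omega
      · have htT' : t ∉ T' := fun hc => (Finset.notMem_erase t T) (hT'sub hc)
        have hmaxT' : ∀ b ∈ T', b ≤ t := fun b hb =>
          T.le_max' b (Finset.mem_of_mem_erase (hT'sub hb))
        have hmaxS : ∀ b ∈ S.erase s, b ≤ s := fun b hb =>
          S.le_max' b (Finset.mem_of_mem_erase hb)
        have hSsort : S.sort (· ≤ ·) = (S.erase s).sort (· ≤ ·) ++ [s] := by
          conv_lhs => rw [← Finset.insert_erase hsS]
          exact sort_insert_max hmaxS (Finset.notMem_erase s S)
        rw [hSsort, sort_insert_max hmaxT' htT']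
        exact List.rel_append hT'f (List.Forall₂.cons hst List.Forall₂.nil)

lemma cnt_add_cnt_compl {m : ℕ} (S : Finset (Fin m)) (x : Fin m) :
    cnt S x + cnt Sᶜ x = m - x := by
  unfold cnt
  rw [← Finset.card_union_of_disjoint]
  · rw [← Finset.filter_union, Finset.union_compl]
    have : Finset.univ.filter (fun y => x ≤ y) = Finset.Ici x := by
      ext y; simp [Finset.mem_Ici]
    rw [this, Fin.card_Ici]
  · exact Finset.disjoint_filter_filter (disjoint_compl_right)

/-- `f ⪯ g` iff `ǧ ⪯ f̌`, where `ˇ` is the multiplicative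
complement (complement of the index set). -/
theorem preceq_compl_iff {m : ℕ} (S T : Finset (Fin m)) :
    preceq S T ↔ preceq Tᶜ Sᶜ := by
  constructor
  · intro h
    apply preceq_of_cnt
    intro x
    have h1 := cnt_le_of_preceq h x
    have h2 := cnt_add_cnt_compl S x
    have h3 := cnt_add_cnt_compl T x
    omega
  · intro h
    apply preceq_of_cnt
    intro x
    have h1 := cnt_le_of_preceq h x
    have h2 := cnt_add_cnt_compl S x
    have h3 := cnt_add_cnt_compl T x
    omega
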